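/- Let X be a d-mode tensor in ℝ^{I₁×⋯×I_d}, let r = (r₁,…,r_d) be a target rank, let X̂ be the rank-r STHOSVD approximation of X with processing order ρ = [1,2,…,d], and let X̂_opt be a best rank-r approximation of X. Then ‖X − X̂‖_F ≤ √d · ‖X − X̂_opt‖_F. -/

import Mathlib

open MeasureTheory ProbabilityTheory BigOperators Matrix

noncomputable section

/-- A `d`-mode tensor with dimensions `I 0 × ⋯ × I (d-1)`. -/
abbrev Tensor (d : ℕ) (I : Fin d → ℕ) : Type := (∀ j, Fin (I j)) → ℝ

namespace Tensor

variable {d : ℕ} {I J : Fin d → ℕ}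

/-- Square of the Frobenius norm of a tensor. -/
def frobSq (X : Tensor d I) : ℝ := ∑ i, (X i) ^ 2

/-- Frobenius norm of a tensor. -/
def frobNorm (X : Tensor d I) : ℝ := Real.sqrt (frobSq X)

/-- Mode-`j` product of a tensor with a square matrix `A ∈ ℝ^{I_j × I_j}`. -/
def modeMul (X : Tensor d I) (j : Fin d) (A : Matrix (Fin (I j)) (Fin (I j)) ℝ) :
    Tensor d I :=
  fun i => ∑ k, A (i j) k * X (Function.update i j k)

/-- `modeMulFirst X A t = X ×₁ A₁ ×₂ A₂ ⋯ ×ₜ Aₜ` (the first `t` modes, square matrices). -/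
def modeMulFirst (X : Tensor d I) (A : ∀ j, Matrix (Fin (I j)) (Fin (I j)) ℝ) : ℕ → Tensor d I
  | 0 => X
  | t + 1 =>
    if h : t < d then modeMul (modeMulFirst X A t) ⟨t, h⟩ (A ⟨t, h⟩)
    else modeMulFirst X A t

/-- Simultaneous mode product in every mode: `multiMul G A = G ×₁ A₁ ⋯ ×_d A_d`,
where `A j ∈ ℝ^{I_j × J_j}` and `G` has dimensions `J`. -/
def multiMul (G : Tensor d J) (A : ∀ j, Matrix (Fin (I j)) (Fin (J j)) ℝ) : Tensor d I :=
  fun i => ∑ k : ∀ j, Fin (J j), (∏ j, A j (i j) (k j)) * G k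

/-- Mode-`j` unfolding of a tensor, as a matrix with rows indexed by `Fin (I j)` and
columns indexed by the remaining modes. -/
def unfold (X : Tensor d I) (j : Fin d) :
    Matrix (Fin (I j)) (∀ k : {k : Fin d // k ≠ j}, Fin (I k.1)) ℝ :=
  Matrix.of fun a b => X fun k => if h : k = j then Fin.cast (congrArg I h.symm) a else b ⟨k, h⟩

end Tensor

/-- `singularValues A i` is the `(i+1)`-st largest singular value of `A`
(0-based indexing; `0` when `i` exceeds the number of rows). -/
def singularValues {m n : Type*} [Fintype m] [Fintype n] [DecidableEq m]
    (A : Matrix m n ℝ) : ℕ → ℝ := fun i =>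
  if h : i < Fintype.card m then
    let ev : Fin (Fintype.card m) → ℝ :=
      (Matrix.isHermitian_mul_conjTranspose_self A).eigenvalues ∘ (Fintype.equivFin m).symm
    Real.sqrt ((ev ∘ Tuple.sort ev) ⟨Fintype.card m - 1 - i, by omega⟩)
  else 0

/-- Spectral norm (largest singular value). -/
def specNorm {m n : Type*} [Fintype m] [Fintype n] [DecidableEq m]
    (A : Matrix m n ℝ) : ℝ := singularValues A 0

/-- Square of the Frobenius norm of a matrix. -/
def matFrobSq {m n : Type*} [Fintype m] [Fintype n] (M : Matrix m n ℝ) : ℝ :=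
  ∑ i, ∑ j, (M i j) ^ 2

/-- Frobenius norm of a matrix. -/
def matFrobNorm {m n : Type*} [Fintype m] [Fintype n] (M : Matrix m n ℝ) : ℝ :=
  Real.sqrt (matFrobSq M)

/-- A rectangular "diagonal" matrix with entries `s 0, s 1, …` placed along the diagonal
determined by the chosen enumerations of the index types. -/
def diagMat (m n : Type*) [Fintype m] [Fintype n] (s : ℕ → ℝ) : Matrix m n ℝ :=
  Matrix.of fun a b =>
    if (Fintype.equivFin m a : ℕ) = (Fintype.equivFin n b : ℕ) then s (Fintype.equivFin m a)
    else 0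

/-- `IsSVD M U s V` : `M = U Σ Vᵀ` is a singular value decomposition of `M`, with `U, V`
orthogonal and the singular values `s` nonnegative and arranged in decreasing order. -/
def IsSVD {m n : Type*} [Fintype m] [Fintype n] [DecidableEq m] [DecidableEq n]
    (M : Matrix m n ℝ) (U : Matrix m m ℝ) (s : ℕ → ℝ) (V : Matrix n n ℝ) : Prop :=
  Uᵀ * U = 1 ∧ Vᵀ * V = 1 ∧ Antitone s ∧ (∀ i, 0 ≤ s i) ∧
    (∀ i, min (Fintype.card m) (Fintype.card n) ≤ i → s i = 0) ∧
    M = U * diagMat m n s * Vᵀ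

/-- `B` is the rank-`r` truncated SVD of `M`: it is obtained from an SVD of `M` by
retaining only the `r` largest singular values. -/
def IsSVDTruncation {m n : Type*} [Fintype m] [Fintype n] [DecidableEq m] [DecidableEq n]
    (M : Matrix m n ℝ) (r : ℕ) (B : Matrix m n ℝ) : Prop :=
  ∃ U s V, IsSVD M U s V ∧ B = U * diagMat m n (fun i => if i < r then s i else 0) * Vᵀ

/-- `A` consists of the first `r` left singular vectors of `M` (the columns of the
orthogonal factor `U` of an SVD of `M` corresponding to the `r` largest singular values). -/
def IsTopLeftSingVecs {m n : Type*} [Fintype m] [Fintype n] [DecidableEq m] [DecidableEq n]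
    (M : Matrix m n ℝ) (r : ℕ) (A : Matrix m (Fin r) ℝ) : Prop :=
  ∃ U s V, IsSVD M U s V ∧ ∃ h : r ≤ Fintype.card m,
    ∀ (a : m) (k : Fin r), A a k = U a ((Fintype.equivFin m).symm (Fin.castLE h k))

/-- Column space of a matrix. -/
def colSpace {m n : Type*} [Fintype n] (M : Matrix m n ℝ) : Submodule ℝ (m → ℝ) :=
  LinearMap.range M.mulVecLin

/-- `Xopt` is a best multilinear rank-`r` approximation of `X` in the Frobenius norm. -/
def IsBestRankApprox {d : ℕ} {I : Fin d → ℕ} (X : Tensor d I) (r : Fin d → ℕ)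
    (Xopt : Tensor d I) : Prop :=
  (∀ j, (Tensor.unfold Xopt j).rank ≤ r j) ∧
    ∀ Y : Tensor d I, (∀ j, (Tensor.unfold Y j).rank ≤ r j) →
      Tensor.frobNorm (X - Xopt) ≤ Tensor.frobNorm (X - Y)

/-- `P` is a selection operator: its columns are distinct columns of the identity matrix. -/
def IsSelection {a b : Type*} [DecidableEq a] (P : Matrix a b ℝ) : Prop :=
  ∃ f : b → a, Function.Injective f ∧ ∀ i k, P i k = if i = f k then 1 else 0

section STHOSVD

variable {d : ℕ}

/-- Dimensions of the partially truncated core tensor in the STHOSVD with processing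
order `[0, 1, …, d-1]`: after processing the first `t` modes, mode `k` has dimension
`r k` for `k < t` and `I k` otherwise. -/
def stDims (I r : Fin d → ℕ) (t : ℕ) : Fin d → ℕ := fun k => if (k : ℕ) < t then r k else I k

theorem stDims_lt {I r : Fin d → ℕ} {t : ℕ} {k : Fin d} (h : (k : ℕ) < t) :
    stDims I r t k = r k := if_pos h

theorem stDims_ge {I r : Fin d → ℕ} {t : ℕ} {k : Fin d} (h : ¬ (k : ℕ) < t) :
    stDims I r t k = I k := if_neg h

theorem stDims_self {I r : Fin d → ℕ} (j : Fin d) : stDims I r (j : ℕ) j = I j :=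
  stDims_ge (lt_irrefl _)

/-- The partially truncated core tensor `G^{(t)} = X ×₁ A₁ᵀ ⋯ ×ₜ Aₜᵀ` of the STHOSVD
(processing order `[0, …, d-1]`). -/
def stCore {I r : Fin d → ℕ} (X : Tensor d I)
    (A : ∀ j, Matrix (Fin (I j)) (Fin (r j)) ℝ) (t : ℕ) : Tensor d (stDims I r t) :=
  Tensor.multiMul X fun k =>
    if h : (k : ℕ) < t then
      Matrix.reindex (finCongr (stDims_lt h).symm) (Equiv.refl _) (A k)ᵀ
    else Matrix.reindex (finCongr (stDims_ge h).symm) (Equiv.refl _)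
      (1 : Matrix (Fin (I k)) (Fin (I k)) ℝ)

/-- The `t`-th partial approximation `X̂^{(t)} = G^{(t)} ×₁ A₁ ⋯ ×ₜ Aₜ` of the STHOSVD. -/
def stPartial {I r : Fin d → ℕ} (X : Tensor d I)
    (A : ∀ j, Matrix (Fin (I j)) (Fin (r j)) ℝ) (t : ℕ) : Tensor d I :=
  Tensor.multiMul (stCore X A t) fun k =>
    if h : (k : ℕ) < t then
      Matrix.reindex (Equiv.refl _) (finCongr (stDims_lt h).symm) (A k)
    else Matrix.reindex (Equiv.refl _) (finCongr (stDims_ge h).symm)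
      (1 : Matrix (Fin (I k)) (Fin (I k)) ℝ)

/-- Column index type for the mode-`j` unfolding of a tensor with dimensions `I`. -/
abbrev colIdx (I : Fin d → ℕ) (j : Fin d) : Type := ∀ k : {k : Fin d // k ≠ j}, Fin (I k.1)

end STHOSVD

/-- Measurable space structure on matrices (entrywise). -/
instance matrixMeasurableSpace (m n : Type*) : MeasurableSpace (Matrix m n ℝ) :=
  inferInstanceAs (MeasurableSpace (m → n → ℝ))

/-- The distribution of a standard Gaussian random matrix: independent `N(0,1)` entries. -/
def gaussMat (m n : Type*) [Fintype m] [Fintype n] : Measure (Matrix m n ℝ) :=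
  (Measure.pi fun _ : m => Measure.pi fun _ : n => gaussianReal 0 1 :
    Measure (m → n → ℝ))

end

noncomputable section

/-- The structure-preserving STHOSVD approximation `X̂ = G^{(d)} ×₁ A₁ ⋯ ×_d A_d`, where
the core `G^{(d)} = X ×₁ P₁ᵀ ⋯ ×_d P_dᵀ` is built from the selection operators `P j` and
the (not necessarily orthonormal) factor matrices are `A j`. -/
def spApprox {d : ℕ} {I L : Fin d → ℕ} (X : Tensor d I)
    (P : ∀ j, Matrix (Fin (I j)) (Fin (L j)) ℝ)
    (A : ∀ j, Matrix (Fin (I j)) (Fin (L j)) ℝ) : Tensor d I :=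
  Tensor.multiMul (stCore X P d) fun k =>
    Matrix.reindex (Equiv.refl _) (finCongr (stDims_lt k.isLt).symm) (A k)

end

noncomputable section
namespace ST
open Tensor
section TensorLemmas
variable {d : ℕ} {I J K : Fin d → ℕ}

open Tensor

variable {d : ℕ} {I J K : Fin d → ℕ}

def tinner {I : Fin d → ℕ} (T S : Tensor d I) : ℝ := ∑ i, T i * S i

lemma frobSq_eq_tinner (T : Tensor d I) : frobSq T = tinner T T := by
  simp [frobSq, tinner, sq]

lemma frobSq_nonneg (T : Tensor d I) : 0 ≤ frobSq T :=
  Finset.sum_nonneg fun i _ => sq_nonneg _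

lemma tinner_self_nonneg (T : Tensor d I) : 0 ≤ tinner T T := by
  rw [← frobSq_eq_tinner]; exact frobSq_nonneg T

/-- Key product-sum exchange. -/
lemma sum_pi_prod (f : ∀ j : Fin d, Fin (J j) → ℝ) :
    ∑ k : ∀ j, Fin (J j), ∏ j, f j (k j) = ∏ j, ∑ a, f j a := by
  rw [Finset.prod_univ_sum]
  simp [Fintype.piFinset_univ]

lemma tinner_multiMul (X : Tensor d J) (M N : ∀ j, Matrix (Fin (I j)) (Fin (J j)) ℝ) :
    tinner (multiMul X M) (multiMul X N)
      = tinner X (multiMul X (fun j => (M j)ᵀ * (N j))) := by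
  simp only [tinner, multiMul]
  have hL : ∀ i : ∀ j, Fin (I j),
      (∑ m : ∀ j, Fin (J j), (∏ j, M j (i j) (m j)) * X m) *
      (∑ n : ∀ j, Fin (J j), (∏ j, N j (i j) (n j)) * X n)
      = ∑ m : ∀ j, Fin (J j), ∑ n : ∀ j, Fin (J j),
          ((∏ j, M j (i j) (m j)) * (∏ j, N j (i j) (n j))) * (X m * X n) := by
    intro i
    rw [Finset.sum_mul_sum]
    apply Finset.sum_congr rfl; intro m _
    apply Finset.sum_congr rfl; intro n _
    ring
  simp only [hL]
  rw [Finset.sum_comm]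
  apply Finset.sum_congr rfl; intro m _
  rw [Finset.sum_comm]
  rw [Finset.mul_sum]
  apply Finset.sum_congr rfl; intro n _
  have : ∑ i : ∀ j, Fin (I j), ((∏ j, M j (i j) (m j)) * (∏ j, N j (i j) (n j))) * (X m * X n)
      = (∑ i : ∀ j, Fin (I j), ∏ j, M j (i j) (m j) * N j (i j) (n j)) * (X m * X n) := by
    rw [Finset.sum_mul]
    apply Finset.sum_congr rfl; intro i _
    rw [Finset.prod_mul_distrib]
  rw [this, sum_pi_prod (fun j a => M j a (m j) * N j a (n j))]
  simp only [Matrix.mul_apply, Matrix.transpose_apply]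
  ring

lemma multiMul_one (X : Tensor d I) :
    multiMul X (fun j => (1 : Matrix (Fin (I j)) (Fin (I j)) ℝ)) = X := by
  funext i
  simp only [multiMul, Matrix.one_apply]
  have h : ∀ k : ∀ j, Fin (I j), (∏ j, if i j = k j then (1:ℝ) else 0)
      = if i = k then 1 else 0 := by
    intro k
    rw [Finset.prod_boole]
    congr 1
    simp [funext_iff]
  simp only [h]
  simp

lemma multiMul_sub (X Y : Tensor d J) (M : ∀ j, Matrix (Fin (I j)) (Fin (J j)) ℝ) :
    multiMul (X - Y) M = multiMul X M - multiMul Y M := by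
  funext i
  simp only [multiMul, Pi.sub_apply, mul_sub, Finset.sum_sub_distrib]

lemma multiMul_multiMul (X : Tensor d J) (C : ∀ j, Matrix (Fin (K j)) (Fin (J j)) ℝ)
    (B : ∀ j, Matrix (Fin (I j)) (Fin (K j)) ℝ) :
    multiMul (multiMul X C) B = multiMul X (fun j => B j * C j) := by
  funext i
  simp only [multiMul, Matrix.mul_apply, Finset.mul_sum]
  rw [Finset.sum_comm]
  apply Finset.sum_congr rfl; intro m _
  have : ∀ k : ∀ j, Fin (K j),
      (∏ j, B j (i j) (k j)) * ((∏ j, C j (k j) (m j)) * X m)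
      = (∏ j, B j (i j) (k j) * C j (k j) (m j)) * X m := by
    intro k; rw [Finset.prod_mul_distrib]; ring
  simp only [this]
  rw [← Finset.sum_mul, sum_pi_prod (fun j a => B j (i j) a * C j a (m j))]

/-- Multilinearity in one mode: if `M` and `M'` agree off mode `t`. -/
lemma multiMul_sub_single (X : Tensor d J) (M M' S : ∀ j, Matrix (Fin (I j)) (Fin (J j)) ℝ)
    (t : Fin d) (hoff : ∀ j, j ≠ t → M j = M' j)
    (hSt : S t = M t - M' t) (hSoff : ∀ j, j ≠ t → S j = M j) :
    multiMul X M - multiMul X M' = multiMul X S := by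
  funext i
  simp only [multiMul, Pi.sub_apply, ← Finset.sum_sub_distrib]
  apply Finset.sum_congr rfl; intro k _
  rw [← sub_mul]
  congr 1
  have ht : (t : Fin d) ∈ Finset.univ := Finset.mem_univ t
  rw [← Finset.mul_prod_erase Finset.univ (fun j => M j (i j) (k j)) ht,
      ← Finset.mul_prod_erase Finset.univ (fun j => M' j (i j) (k j)) ht,
      ← Finset.mul_prod_erase Finset.univ (fun j => S j (i j) (k j)) ht]
  have he : ∀ j ∈ Finset.univ.erase t, S j (i j) (k j) = M j (i j) (k j) := fun j hj => by
    rw [hSoff j (Finset.mem_erase.mp hj).1]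
  have he' : ∀ j ∈ Finset.univ.erase t, M' j (i j) (k j) = M j (i j) (k j) := fun j hj => by
    rw [hoff j (Finset.mem_erase.mp hj).1]
  rw [Finset.prod_congr rfl he, Finset.prod_congr rfl he', ← sub_mul]
  congr 1
  rw [hSt]
  simp [Matrix.sub_apply]

/-- If one of the matrices is zero, the product is zero. -/
lemma multiMul_eq_zero (X : Tensor d J) (M : ∀ j, Matrix (Fin (I j)) (Fin (J j)) ℝ)
    (t : Fin d) (ht : M t = 0) : multiMul X M = 0 := by
  funext i
  simp only [multiMul]
  apply Finset.sum_eq_zero; intro k _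
  have : ∏ j, M j (i j) (k j) = 0 := by
    apply Finset.prod_eq_zero (Finset.mem_univ t)
    simp [ht]
  simp [this]

lemma tinner_sub_left (T S U : Tensor d I) : tinner (T - S) U = tinner T U - tinner S U := by
  simp [tinner, sub_mul, Finset.sum_sub_distrib]

lemma tinner_sub_right (T S U : Tensor d I) : tinner U (T - S) = tinner U T - tinner U S := by
  simp [tinner, mul_sub, Finset.sum_sub_distrib]

lemma tinner_sum_left {α : Type*} (s : Finset α) (f : α → Tensor d I) (U : Tensor d I) :
    tinner (∑ a ∈ s, f a) U = ∑ a ∈ s, tinner (f a) U := by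
  simp [tinner, Finset.sum_mul]
  rw [Finset.sum_comm]

lemma tinner_sum_right {α : Type*} (s : Finset α) (f : α → Tensor d I) (U : Tensor d I) :
    tinner U (∑ a ∈ s, f a) = ∑ a ∈ s, tinner U (f a) := by
  simp [tinner, Finset.mul_sum]
  rw [Finset.sum_comm]

/-- Isometry: applying matrices with orthonormal columns preserves `frobSq`. -/
lemma frobSq_multiMul_iso (X : Tensor d J) (F : ∀ j, Matrix (Fin (I j)) (Fin (J j)) ℝ)
    (hF : ∀ j, (F j)ᵀ * F j = 1) : frobSq (multiMul X F) = frobSq X := by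
  rw [frobSq_eq_tinner, frobSq_eq_tinner, tinner_multiMul]
  simp only [hF]
  rw [multiMul_one]

/-- Positivity: `⟪X, (⊗ⱼ BⱼᵀBⱼ) X⟫ ≥ 0`. -/
lemma tinner_multiMul_nonneg (X : Tensor d J) (L : Fin d → ℕ)
    (B : ∀ j, Matrix (Fin (L j)) (Fin (J j)) ℝ) :
    0 ≤ tinner X (multiMul X (fun j => (B j)ᵀ * B j)) := by
  rw [← tinner_multiMul]
  exact tinner_self_nonneg _


lemma tinner_zero_right (T : Tensor d I) : tinner T 0 = 0 := by
  simp [tinner]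

lemma frobSq_multiMul_le (Z : Tensor d J) (C : ∀ k, Matrix (Fin (K k)) (Fin (J k)) ℝ)
    (hC : ∀ k, ∃ B : Matrix (Fin (J k)) (Fin (J k)) ℝ,
      1 - (C k)ᵀ * C k = Bᵀ * B) :
    frobSq (multiMul Z C) ≤ frobSq Z := by
  classical
  set P : ∀ k, Matrix (Fin (J k)) (Fin (J k)) ℝ := fun k => (C k)ᵀ * C k with hP
  set f : ℕ → ℝ :=
    (fun t => tinner Z (multiMul Z (fun k : Fin d => if (k : ℕ) < t then 1 else P k))) with hf
  have hmono : ∀ t, f t ≤ f (t + 1) := by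
    intro t
    by_cases ht : t < d
    · set jt : Fin d := ⟨t, ht⟩ with hjt
      have hoff : ∀ k : Fin d, k ≠ jt →
          (fun k : Fin d => if (k : ℕ) < t + 1 then (1 : Matrix (Fin (J k)) (Fin (J k)) ℝ) else P k) k
            = (fun k : Fin d => if (k : ℕ) < t then (1 : Matrix (Fin (J k)) (Fin (J k)) ℝ) else P k) k := by
        intro k hk
        have hne : (k : ℕ) ≠ t := by
          intro hc
          exact hk (Fin.ext (by simp [hjt, hc]))
        by_cases hlt : (k : ℕ) < t
        · have h2 : (k : ℕ) < t + 1 := by omega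
          simp [hlt, h2]
        · have h2 : ¬ (k : ℕ) < t + 1 := by omega
          simp [hlt, h2]
      set S : ∀ k, Matrix (Fin (J k)) (Fin (J k)) ℝ :=
        (fun k : Fin d => if (k : ℕ) = t then 1 - P k else if (k : ℕ) < t then 1 else P k)
        with hSdef
      have hSt : S jt = (if ((jt : Fin d) : ℕ) < t + 1 then (1 : Matrix (Fin (J jt)) (Fin (J jt)) ℝ) else P jt)
          - (if ((jt : Fin d) : ℕ) < t then (1 : Matrix (Fin (J jt)) (Fin (J jt)) ℝ) else P jt) := by
        have hv : ((jt : Fin d) : ℕ) = t := rfl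
        simp only [hSdef, hv, if_pos rfl, if_pos (Nat.lt_succ_self t), if_neg (Nat.lt_irrefl t), ↓reduceIte]
      have hSoff : ∀ k : Fin d, k ≠ jt →
          S k = (if (k : ℕ) < t + 1 then (1 : Matrix (Fin (J k)) (Fin (J k)) ℝ) else P k) := by
        intro k hk
        have hne : (k : ℕ) ≠ t := by
          intro hc
          exact hk (Fin.ext (by simp [hjt, hc]))
        by_cases hlt : (k : ℕ) < t
        · have h2 : (k : ℕ) < t + 1 := by omega
          simp [hSdef, hne, hlt, h2]
        · have h2 : ¬ (k : ℕ) < t + 1 := by omega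
          simp [hSdef, hne, hlt, h2]
      have hdiff := multiMul_sub_single Z
        (fun k : Fin d => if (k : ℕ) < t + 1 then (1 : Matrix (Fin (J k)) (Fin (J k)) ℝ) else P k)
        (fun k : Fin d => if (k : ℕ) < t then (1 : Matrix (Fin (J k)) (Fin (J k)) ℝ) else P k)
        S jt hoff hSt hSoff
      have hS : ∀ k : Fin d, ∃ (l : ℕ) (B : Matrix (Fin l) (Fin (J k)) ℝ), S k = Bᵀ * B := by
        intro k
        by_cases h : (k : ℕ) = t
        · obtain ⟨B, hB⟩ := hC k
          exact ⟨J k, B, by simp only [hSdef, if_pos h]; rw [← hB, hP]⟩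
        · by_cases hk : (k : ℕ) < t
          · exact ⟨J k, 1, by simp [hSdef, h, hk]⟩
          · exact ⟨K k, C k, by simp [hSdef, h, hk, hP]⟩
      choose L B hB using hS
      have hrw : S = fun k : Fin d => (B k)ᵀ * B k := funext hB
      have hpos := tinner_multiMul_nonneg Z L B
      rw [← hrw] at hpos
      rw [← hdiff, tinner_sub_right] at hpos
      simp only [hf]
      linarith
    · have heq : (fun k : Fin d => if (k : ℕ) < t + 1 then (1 : Matrix (Fin (J k)) (Fin (J k)) ℝ) else P k)
          = (fun k : Fin d => if (k : ℕ) < t then (1 : Matrix (Fin (J k)) (Fin (J k)) ℝ) else P k) := by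
        funext k
        have h1 : (k : ℕ) < t := lt_of_lt_of_le k.isLt (le_of_not_gt ht)
        have h2 : (k : ℕ) < t + 1 := by omega
        simp [h1, h2]
      simp only [hf, heq]
      exact le_refl _
  have h0 : f 0 = frobSq (multiMul Z C) := by
    have : (fun k : Fin d => if (k : ℕ) < 0 then (1 : Matrix (Fin (J k)) (Fin (J k)) ℝ) else P k) = P := by
      funext k; simp
    simp only [hf, this]
    rw [hP, ← tinner_multiMul, ← frobSq_eq_tinner]
  have hd : f d = frobSq Z := by
    have : (fun k : Fin d => if (k : ℕ) < d then (1 : Matrix (Fin (J k)) (Fin (J k)) ℝ) else P k)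
        = fun k : Fin d => (1 : Matrix (Fin (J k)) (Fin (J k)) ℝ) := by
      funext k; simp [k.isLt]
    simp only [hf, this]
    rw [multiMul_one, ← frobSq_eq_tinner]
  have hmain : f 0 ≤ f d := monotone_nat_of_le_succ hmono (Nat.zero_le d)
  rw [h0, hd] at hmain
  exact hmain

end TensorLemmas
section UnfoldLemmas
variable {d : ℕ} {I J K : Fin d → ℕ}

open Tensor

variable {d : ℕ} {I J K : Fin d → ℕ}

def ins (I : Fin d → ℕ) (j : Fin d) (a : Fin (I j)) (b : colIdx I j) : ∀ k, Fin (I k) :=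
  fun k => if h : k = j then Fin.cast (congrArg I h.symm) a else b ⟨k, h⟩

lemma ins_self (j : Fin d) (a : Fin (I j)) (b : colIdx I j) : ins I j a b j = a := by
  simp only [ins, dif_pos rfl]
  apply Fin.ext
  simp [Fin.coe_cast]

lemma ins_ne (j : Fin d) (a : Fin (I j)) (b : colIdx I j) {k : Fin d} (h : k ≠ j) :
    ins I j a b k = b ⟨k, h⟩ := dif_neg h

lemma unfold_apply (T : Tensor d I) (j : Fin d) (a : Fin (I j)) (b : colIdx I j) :
    unfold T j a b = T (ins I j a b) := rfl

/-- The splitting equivalence for mode `j`. -/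
def modes (I : Fin d → ℕ) (j : Fin d) : (∀ k, Fin (I k)) ≃ Fin (I j) × colIdx I j where
  toFun i := (i j, fun k => i k.1)
  invFun p := ins I j p.1 p.2
  left_inv i := by
    funext k
    show ins I j (i j) (fun k' => i k'.1) k = i k
    by_cases h : k = j
    · subst h; exact ins_self k (i k) _
    · rw [ins_ne _ _ _ h]
  right_inv p := by
    refine Prod.ext (ins_self _ _ _) ?_
    funext k
    exact ins_ne _ _ _ k.2

lemma sum_modes (j : Fin d) (g : (∀ k, Fin (I k)) → ℝ) :
    ∑ m, g m = ∑ a : Fin (I j), ∑ b : colIdx I j, g (ins I j a b) := by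
  rw [← Equiv.sum_comp (modes I j).symm g, Fintype.sum_prod_type]
  rfl

lemma prod_split (j : Fin d) (f : Fin d → ℝ) :
    ∏ k, f k = f j * ∏ k' : {k : Fin d // k ≠ j}, f k'.1 := by
  rw [← Finset.mul_prod_erase Finset.univ f (Finset.mem_univ j)]
  congr 1
  rw [Finset.prod_subtype (Finset.univ.erase j) (p := fun k => k ≠ j)
    (fun x => by simp [Finset.mem_erase]) (fun k => f k)]

lemma frobSq_eq_matFrobSq (T : Tensor d I) (j : Fin d) : frobSq T = matFrobSq (unfold T j) := by
  rw [frobSq, sum_modes j]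
  rfl

lemma unfold_sub (T S : Tensor d I) (j : Fin d) :
    unfold (T - S) j = unfold T j - unfold S j := rfl

def colMat (C : ∀ k, Matrix (Fin (K k)) (Fin (J k)) ℝ) (j : Fin d) :
    Matrix (colIdx K j) (colIdx J j) ℝ :=
  Matrix.of fun b c => ∏ k : {k : Fin d // k ≠ j}, C k.1 (b k) (c k)

lemma unfold_multiMul (T : Tensor d J) (C : ∀ k, Matrix (Fin (K k)) (Fin (J k)) ℝ) (j : Fin d) :
    unfold (multiMul T C) j = C j * unfold T j * (colMat C j)ᵀ := by
  funext a b
  rw [unfold_apply]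
  show (multiMul T C) (ins K j a b) = _
  rw [multiMul, sum_modes j (I := J)]
  have hsplit : ∀ (c : Fin (J j)) (mb : colIdx J j),
      (∏ k, C k (ins K j a b k) (ins J j c mb k))
        = C j a c * ∏ k' : {k : Fin d // k ≠ j}, C k'.1 (b k') (mb k') := by
    intro c mb
    rw [prod_split j]
    congr 1
    · rw [ins_self, ins_self]
    · apply Finset.prod_congr rfl
      intro k' _
      rw [ins_ne _ _ _ k'.2, ins_ne _ _ _ k'.2]
  have : ∀ (c : Fin (J j)) (mb : colIdx J j),
      (∏ k, C k (ins K j a b k) (ins J j c mb k)) * T (ins J j c mb)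
        = C j a c * (∏ k' : {k : Fin d // k ≠ j}, C k'.1 (b k') (mb k')) * T (ins J j c mb) := by
    intro c mb; rw [hsplit]
  simp only [this]
  simp only [Matrix.mul_apply, Matrix.transpose_apply, colMat, Matrix.of_apply,
    unfold_apply, Finset.sum_mul, Finset.mul_sum]
  rw [Finset.sum_comm]
  apply Finset.sum_congr rfl; intro mb _
  apply Finset.sum_congr rfl; intro c _
  ring

lemma rank_unfold_multiMul_le (T : Tensor d J) (C : ∀ k, Matrix (Fin (K k)) (Fin (J k)) ℝ)
    (j : Fin d) : (unfold (multiMul T C) j).rank ≤ (unfold T j).rank := by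
  rw [unfold_multiMul]
  exact le_trans (Matrix.rank_mul_le_left _ _)
    (Matrix.rank_mul_le_right _ _)

lemma colMat_one (C : ∀ k, Matrix (Fin (J k)) (Fin (J k)) ℝ) (j : Fin d)
    (h : ∀ k, k ≠ j → C k = 1) : colMat C j = 1 := by
  funext b c
  simp only [colMat, Matrix.of_apply]
  have : ∀ k' : {k : Fin d // k ≠ j}, C k'.1 (b k') (c k')
      = if b k' = c k' then 1 else 0 := by
    intro k'
    rw [h k'.1 k'.2, Matrix.one_apply]
  simp only [this]
  rw [Finset.prod_boole, Matrix.one_apply]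
  congr 1
  simp [funext_iff]

lemma unfold_multiMul_single (T : Tensor d J) (C : ∀ k, Matrix (Fin (J k)) (Fin (J k)) ℝ)
    (j : Fin d) (h : ∀ k, k ≠ j → C k = 1) :
    unfold (multiMul T C) j = C j * unfold T j := by
  rw [unfold_multiMul, colMat_one C j h, Matrix.transpose_one, Matrix.mul_one]


end UnfoldLemmas
section MatrixLemmas
variable {m n : Type*} [Fintype m] [Fintype n]


/-! ### dot product helpers -/

variable {m n : Type*} [Fintype m] [Fintype n]

lemma dot_self_nonneg (x : m → ℝ) : 0 ≤ x ⬝ᵥ x :=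
  Finset.sum_nonneg fun i _ => mul_self_nonneg _

lemma dot_sum_right (x : m → ℝ) {K : ℕ} (f : Fin K → m → ℝ) :
    x ⬝ᵥ (∑ l, f l) = ∑ l, x ⬝ᵥ f l := by
  simp only [dotProduct, Finset.sum_apply, Finset.mul_sum]
  rw [Finset.sum_comm]

lemma dist_sq_eq {K : ℕ} (u : Fin K → m → ℝ)
    (hu : ∀ l l', u l ⬝ᵥ u l' = if l = l' then 1 else 0) (x : m → ℝ) (coef : Fin K → ℝ) :
    (x - ∑ l, coef l • u l) ⬝ᵥ (x - ∑ l, coef l • u l)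
      = x ⬝ᵥ x - 2 * (∑ l, coef l * (u l ⬝ᵥ x)) + ∑ l, coef l ^ 2 := by
  set w : m → ℝ := ∑ l, coef l • u l with hw
  have hxw : x ⬝ᵥ w = ∑ l, coef l * (u l ⬝ᵥ x) := by
    rw [hw, dot_sum_right]
    apply Finset.sum_congr rfl; intro l _
    rw [dotProduct_smul, smul_eq_mul, dotProduct_comm]
  have hww : w ⬝ᵥ w = ∑ l, coef l ^ 2 := by
    rw [hw, dot_sum_right]
    apply Finset.sum_congr rfl; intro l _
    rw [dotProduct_smul, smul_eq_mul]
    have : (∑ l', coef l' • u l') ⬝ᵥ u l = ∑ l', coef l' * (u l' ⬝ᵥ u l) := by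
      rw [dotProduct_comm, dot_sum_right]
      apply Finset.sum_congr rfl; intro l' _
      rw [dotProduct_smul, smul_eq_mul, dotProduct_comm]
    rw [this]
    simp only [hu, mul_ite, mul_one, mul_zero]
    rw [Finset.sum_ite_eq' Finset.univ l coef]
    simp [sq]
  have hwx : w ⬝ᵥ x = ∑ l, coef l * (u l ⬝ᵥ x) := by rw [dotProduct_comm]; exact hxw
  rw [sub_dotProduct, dotProduct_sub, dotProduct_sub, hxw, hww, hwx]
  ring

lemma bessel {K : ℕ} (u : Fin K → m → ℝ)
    (hu : ∀ l l', u l ⬝ᵥ u l' = if l = l' then 1 else 0) (x : m → ℝ) :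
    ∑ l, (u l ⬝ᵥ x) ^ 2 ≤ x ⬝ᵥ x := by
  have h := dist_sq_eq u hu x (fun l => u l ⬝ᵥ x)
  have h0 := dot_self_nonneg (x - ∑ l, (u l ⬝ᵥ x) • u l)
  rw [h] at h0
  have : ∑ l, (u l ⬝ᵥ x) * (u l ⬝ᵥ x) = ∑ l, (u l ⬝ᵥ x) ^ 2 := by
    apply Finset.sum_congr rfl; intro l _; ring
  nlinarith [this]

lemma proj_ineq {K : ℕ} (u : Fin K → m → ℝ)
    (hu : ∀ l l', u l ⬝ᵥ u l' = if l = l' then 1 else 0) (x v : m → ℝ)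
    (coef : Fin K → ℝ) (hv : v = ∑ l, coef l • u l) :
    x ⬝ᵥ x - ∑ l, (u l ⬝ᵥ x) ^ 2 ≤ (x - v) ⬝ᵥ (x - v) := by
  rw [hv, dist_sq_eq u hu x coef]
  have hexp : ∑ l, ((u l ⬝ᵥ x) - coef l) ^ 2
      = ∑ l, (u l ⬝ᵥ x) ^ 2 - 2 * (∑ l, coef l * (u l ⬝ᵥ x)) + ∑ l, coef l ^ 2 := by
    rw [Finset.mul_sum, ← Finset.sum_sub_distrib, ← Finset.sum_add_distrib]
    apply Finset.sum_congr rfl; intro l _; ring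
  have h0 : 0 ≤ ∑ l, ((u l ⬝ᵥ x) - coef l) ^ 2 :=
    Finset.sum_nonneg fun l _ => sq_nonneg _
  linarith [hexp ▸ h0]

/-! ### scalar rearrangement -/

lemma rearrange (L R : ℕ) (c q : ℕ → ℝ) (hc : ∀ {i j : ℕ}, i ≤ j → c j ≤ c i)
    (hc0 : ∀ i, 0 ≤ c i) (hq0 : ∀ i, 0 ≤ q i) (hq1 : ∀ i, q i ≤ 1)
    (hqs : ∑ i ∈ Finset.range L, q i ≤ (R : ℝ)) :
    ∑ i ∈ Finset.range L, (if i < R then 0 else c i)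
      ≤ ∑ i ∈ Finset.range L, c i - ∑ i ∈ Finset.range L, q i * c i := by
  have s1 : ∑ i ∈ Finset.range L, (if i < R then 0 else c i)
      = ∑ i ∈ Finset.range L, c i - ∑ i ∈ Finset.range (min L R), c i := by
    have : ∑ i ∈ Finset.range L, (c i - if i < R then 0 else c i)
        = ∑ i ∈ Finset.range (min L R), c i := by
      have h1 : ∀ i, c i - (if i < R then 0 else c i) = if i < R then c i else 0 := by
        intro i; by_cases h : i < R <;> simp [h]
      simp only [h1]
      rw [← Finset.sum_filter]
      congr 1
      ext i
      simp [Nat.lt_min, and_comm]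
    rw [Finset.sum_sub_distrib] at this
    linarith
  have s2 : ∑ i ∈ Finset.range L, q i * c i ≤ ∑ i ∈ Finset.range (min L R), c i := by
    by_cases hLR : L ≤ R
    · rw [Nat.min_eq_left hLR]
      apply Finset.sum_le_sum
      intro i _
      calc q i * c i ≤ 1 * c i := mul_le_mul_of_nonneg_right (hq1 i) (hc0 i)
        _ = c i := one_mul _
    · push_neg at hLR
      have hRL : R ≤ L := le_of_lt hLR
      rw [Nat.min_eq_right hRL]
      have hsplit : ∑ i ∈ Finset.range L, q i * c i
          = ∑ i ∈ Finset.range R, q i * c i + ∑ i ∈ Finset.Ico R L, q i * c i := by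
        rw [Finset.range_eq_Ico, ← Finset.sum_Ico_consecutive _ (Nat.zero_le R) hRL, Finset.range_eq_Ico]
      have hsplitq : ∑ i ∈ Finset.range L, q i
          = ∑ i ∈ Finset.range R, q i + ∑ i ∈ Finset.Ico R L, q i := by
        rw [Finset.range_eq_Ico, ← Finset.sum_Ico_consecutive _ (Nat.zero_le R) hRL, Finset.range_eq_Ico]
      have hA : ∑ i ∈ Finset.range R, q i * c i
          ≤ ∑ i ∈ Finset.range R, (c i + (q i - 1) * c R) := by
        apply Finset.sum_le_sum
        intro i hi
        have hiR : i ≤ R := le_of_lt (Finset.mem_range.mp hi)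
        have h1 : (q i - 1) * c i ≤ (q i - 1) * c R := by
          apply mul_le_mul_of_nonpos_left (hc hiR)
          linarith [hq1 i]
        nlinarith
      have hB : ∑ i ∈ Finset.Ico R L, q i * c i ≤ ∑ i ∈ Finset.Ico R L, q i * c R := by
        apply Finset.sum_le_sum
        intro i hi
        have hRi : R ≤ i := (Finset.mem_Ico.mp hi).1
        exact mul_le_mul_of_nonneg_left (hc hRi) (hq0 i)
      have hA' : ∑ i ∈ Finset.range R, (c i + (q i - 1) * c R)
          = ∑ i ∈ Finset.range R, c i + (∑ i ∈ Finset.range R, q i) * c R - R * c R := by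
        rw [Finset.sum_add_distrib]
        have : ∑ i ∈ Finset.range R, (q i - 1) * c R
            = (∑ i ∈ Finset.range R, q i) * c R - R * c R := by
          rw [← Finset.sum_mul]
          rw [Finset.sum_sub_distrib]
          simp [sub_mul]
        rw [this]; ring
      have hB' : ∑ i ∈ Finset.Ico R L, q i * c R = (∑ i ∈ Finset.Ico R L, q i) * c R := by
        rw [Finset.sum_mul]
      have hfin : ((∑ i ∈ Finset.range L, q i) - R) * c R ≤ 0 := by
        apply mul_nonpos_iff.mpr
        right
        constructor
        · linarith
        · exact hc0 R
      rw [hsplit]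
      rw [hsplitq] at hfin
      nlinarith [hA, hB, hA', hB', hfin]
  linarith

/-! ### diagonal matrix computations -/

lemma sum_fin_ite {cn : ℕ} (i : ℕ) (f : Fin cn → ℝ) :
    ∑ q : Fin cn, (if i = (q : ℕ) then f q else 0) = if h : i < cn then f ⟨i, h⟩ else 0 := by
  by_cases h : i < cn
  · rw [dif_pos h, Finset.sum_eq_single (⟨i, h⟩ : Fin cn)]
    · simp
    · intro q _ hq
      rw [if_neg]
      intro hc
      exact hq (Fin.ext hc.symm)
    · intro hmem; exact absurd (Finset.mem_univ _) hmem
  · rw [dif_neg h]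
    apply Finset.sum_eq_zero
    intro q _
    rw [if_neg]
    intro hc
    exact h (hc ▸ q.isLt)

lemma filter_range_min (a b : ℕ) :
    (Finset.range a).filter (· < b) = Finset.range (min a b) := by
  ext i
  simp [Nat.lt_min]

lemma matFrobSq_diagMat (s : ℕ → ℝ) :
    matFrobSq (diagMat m n s)
      = ∑ i ∈ Finset.range (min (Fintype.card m) (Fintype.card n)), s i ^ 2 := by
  classical
  rw [matFrobSq]
  rw [← Equiv.sum_comp (Fintype.equivFin m).symm (fun a => ∑ b, (diagMat m n s a b) ^ 2)]
  have h1 : ∀ p : Fin (Fintype.card m),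
      ∑ b, (diagMat m n s ((Fintype.equivFin m).symm p) b) ^ 2
        = if (p : ℕ) < Fintype.card n then s p ^ 2 else 0 := by
    intro p
    rw [← Equiv.sum_comp (Fintype.equivFin n).symm
      (fun b => (diagMat m n s ((Fintype.equivFin m).symm p) b) ^ 2)]
    have h2 : ∀ q : Fin (Fintype.card n),
        (diagMat m n s ((Fintype.equivFin m).symm p) ((Fintype.equivFin n).symm q)) ^ 2
          = if (p : ℕ) = (q : ℕ) then s p ^ 2 else 0 := by
      intro q
      simp only [diagMat, Matrix.of_apply, Equiv.apply_symm_apply]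
      by_cases h : (p : ℕ) = (q : ℕ) <;> simp [h]
    simp only [h2]
    rw [sum_fin_ite (p : ℕ) (fun _ => s p ^ 2)]
    by_cases h : (p : ℕ) < Fintype.card n <;> simp [h]
  simp only [h1]
  rw [Fin.sum_univ_eq_sum_range (fun i => if i < Fintype.card n then s i ^ 2 else 0)]
  rw [← Finset.sum_filter, filter_range_min]

lemma matFrobSq_nonneg (M : Matrix m n ℝ) : 0 ≤ matFrobSq M :=
  Finset.sum_nonneg fun _ _ => Finset.sum_nonneg fun _ _ => sq_nonneg _

lemma matFrobSq_eq_trace (M : Matrix m n ℝ) : matFrobSq M = Matrix.trace (Mᵀ * M) := by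
  rw [matFrobSq, Matrix.trace]
  simp only [Matrix.diag_apply, Matrix.mul_apply, Matrix.transpose_apply]
  rw [Finset.sum_comm]
  apply Finset.sum_congr rfl; intro j _
  apply Finset.sum_congr rfl; intro i _
  ring

lemma matFrobSq_conj [DecidableEq m] [DecidableEq n] (U : Matrix m m ℝ) (B : Matrix m n ℝ)
    (V : Matrix n n ℝ) (hU : Uᵀ * U = 1) (hV : Vᵀ * V = 1) :
    matFrobSq (U * B * Vᵀ) = matFrobSq B := by
  rw [matFrobSq_eq_trace, matFrobSq_eq_trace]
  have h1 : (U * B * Vᵀ)ᵀ * (U * B * Vᵀ) = V * ((Bᵀ * B) * Vᵀ) := by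
    calc (U * B * Vᵀ)ᵀ * (U * B * Vᵀ)
        = V * (Bᵀ * ((Uᵀ * U) * (B * Vᵀ))) := by
          simp only [Matrix.transpose_mul, Matrix.transpose_transpose, Matrix.mul_assoc]
      _ = V * ((Bᵀ * B) * Vᵀ) := by rw [hU, Matrix.one_mul, Matrix.mul_assoc]
  rw [h1, Matrix.trace_mul_comm V ((Bᵀ * B) * Vᵀ), Matrix.mul_assoc, hV, Matrix.mul_one]

lemma matFrobSq_reindex {m' n' : Type*} [Fintype m'] [Fintype n'] (e : m ≃ m') (f : n ≃ n')
    (M : Matrix m n ℝ) : matFrobSq (Matrix.reindex e f M) = matFrobSq M := by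
  rw [matFrobSq, matFrobSq]
  refine (Fintype.sum_equiv e (fun i => ∑ j, (M i j) ^ 2)
    (fun i' => ∑ j', ((Matrix.reindex e f M) i' j') ^ 2) fun i => ?_).symm
  refine Fintype.sum_equiv f _ _ fun j => ?_
  simp

/-! ### the projection bound for the diagonal matrix -/

lemma diag_approx [DecidableEq m] [DecidableEq n] (s : ℕ → ℝ) (hs : Antitone s)
    (hs0 : ∀ i, 0 ≤ s i) (r : ℕ) (N : Matrix m n ℝ) (hN : N.rank ≤ r) :
    ∑ i ∈ Finset.range (min (Fintype.card m) (Fintype.card n)),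
        (if i < r then 0 else s i ^ 2)
      ≤ matFrobSq (diagMat m n s - N) := by
  classical
  set cm := Fintype.card m with hcm
  set cn := Fintype.card n with hcn
  set em := Fintype.equivFin m with hem
  set E := EuclideanSpace ℝ m with hE
  set Leq : E ≃ₗ[ℝ] (m → ℝ) := WithLp.linearEquiv 2 ℝ (m → ℝ) with hLeq
  set T : (n → ℝ) →ₗ[ℝ] E := Leq.symm.toLinearMap ∘ₗ N.mulVecLin with hT
  set S : Submodule ℝ E := LinearMap.range T with hS
  have hfinrank : Module.finrank ℝ ↥S ≤ r := by
    have h1 : S = Submodule.map (Leq.symm : (m → ℝ) →ₗ[ℝ] E)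
        (LinearMap.range N.mulVecLin) := by
      rw [hS, hT, LinearMap.range_comp]
    rw [h1, LinearEquiv.finrank_map_eq Leq.symm (LinearMap.range N.mulVecLin)]
    exact hN
  set K := Module.finrank ℝ ↥S with hK
  set ob : OrthonormalBasis (Fin K) ℝ ↥S := stdOrthonormalBasis ℝ ↥S with hob
  set u : Fin K → (m → ℝ) := fun l => Leq ((ob l : ↥S) : E) with hu_def
  have hu : ∀ l l', u l ⬝ᵥ u l' = if l = l' then 1 else 0 := by
    intro l l'
    have h1 := orthonormal_iff_ite.mp ob.orthonormal l l'
    rw [Submodule.coe_inner] at h1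
    have h2 : (inner ℝ ((ob l : ↥S) : E) ((ob l' : ↥S) : E) : ℝ)
        = u l ⬝ᵥ u l' := by
      rw [PiLp.inner_apply]
      apply Finset.sum_congr rfl
      intro a _
      have ha : ∀ z : Fin K, u z a = ((ob z : ↥S) : E) a := fun z => rfl
      rw [ha l, ha l']
      simp [RCLike.inner_apply, starRingEnd_apply, star_trivial]
      ring
    rw [h2] at h1
    exact h1
  -- column expansion
  have hcol : ∀ b : n, ∃ coef : Fin K → ℝ,
      (fun a => N a b) = ∑ l, coef l • u l := by
    intro b
    have hmem : Leq.symm (fun a => N a b) ∈ S := by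
      refine ⟨Pi.single b 1, ?_⟩
      rw [hT]
      simp only [LinearMap.coe_comp, Function.comp_apply, LinearEquiv.coe_coe,
        Matrix.mulVecLin_apply, Matrix.mulVec_single]
      congr 1
      funext a
      simp
    set z : ↥S := ⟨Leq.symm (fun a => N a b), hmem⟩ with hz
    refine ⟨fun l => ob.repr z l, ?_⟩
    have hrepr := ob.sum_repr z
    have h3 : ((∑ l, ob.repr z l • ob l : ↥S) : E) = (z : E) := by rw [hrepr]
    have h4 : ((∑ l, ob.repr z l • ob l : ↥S) : E)
        = ∑ l, ob.repr z l • ((ob l : ↥S) : E) := by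
      norm_cast
    have h5 : Leq (z : E) = (fun a => N a b) := by
      rw [hz]
      exact Leq.apply_symm_apply _
    rw [← h5, ← h3, h4, map_sum]
    apply Finset.sum_congr rfl
    intro l _
    exact _root_.map_smul Leq (ob.repr z l) ((ob l : ↥S) : E)
  -- diag entries of the projection
  set q : ℕ → ℝ := fun i =>
    if h : i < cm then ∑ l, (u l (em.symm ⟨i, h⟩)) ^ 2 else 0 with hq_def
  have hq0 : ∀ i, 0 ≤ q i := by
    intro i
    simp only [hq_def]
    by_cases h : i < cm
    · rw [dif_pos h]; exact Finset.sum_nonneg fun _ _ => sq_nonneg _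
    · rw [dif_neg h]
  have hq1 : ∀ i, q i ≤ 1 := by
    intro i
    simp only [hq_def]
    by_cases h : i < cm
    · rw [dif_pos h]
      set a := em.symm ⟨i, h⟩
      have hb := bessel u hu (Pi.single a 1)
      have h1 : ∀ l, u l ⬝ᵥ Pi.single a 1 = u l a := by
        intro l; rw [dotProduct_single, mul_one]
      have h2 : (Pi.single a 1 : m → ℝ) ⬝ᵥ Pi.single a 1 = 1 := by
        rw [dotProduct_single, mul_one, Pi.single_eq_same]
      simp only [h1, h2] at hb
      exact hb
    · rw [dif_neg h]; norm_num
  have hqsum : ∑ i ∈ Finset.range cm, q i = (K : ℝ) := by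
    have h1 : ∑ i ∈ Finset.range cm, q i = ∑ p : Fin cm, q (p : ℕ) :=
      (Fin.sum_univ_eq_sum_range (fun i => q i) cm).symm
    rw [h1]
    have h2 : ∀ p : Fin cm, q (p : ℕ) = ∑ l, (u l (em.symm p)) ^ 2 := by
      intro p
      simp only [hq_def]
      rw [dif_pos p.isLt]
    simp only [h2]
    rw [Finset.sum_comm]
    have h3 : ∀ l, ∑ p : Fin cm, (u l (em.symm p)) ^ 2 = u l ⬝ᵥ u l := by
      intro l
      rw [dotProduct]
      rw [← Equiv.sum_comp em.symm (fun a => u l a * u l a)]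
      apply Finset.sum_congr rfl
      intro p _
      ring
    simp only [h3, hu]
    simp
  -- dot of u with a diagonal column
  have hdot : ∀ (l : Fin K) (b : n), u l ⬝ᵥ (fun a => diagMat m n s a b)
      = if h : ((Fintype.equivFin n) b : ℕ) < cm
          then u l (em.symm ⟨((Fintype.equivFin n) b : ℕ), h⟩) * s ((Fintype.equivFin n) b)
          else 0 := by
    intro l b
    rw [dotProduct]
    rw [← Equiv.sum_comp em.symm (fun a => u l a * diagMat m n s a b)]
    have h1 : ∀ p : Fin cm, u l (em.symm p) * diagMat m n s (em.symm p) b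
        = if ((Fintype.equivFin n) b : ℕ) = (p : ℕ) then u l (em.symm p) * s p else 0 := by
      intro p
      simp only [diagMat, Matrix.of_apply, ← hem, Equiv.apply_symm_apply]
      by_cases h : (p : ℕ) = ((Fintype.equivFin n) b : ℕ)
      · rw [if_pos h, if_pos h.symm]
      · rw [if_neg h, if_neg (fun hc => h hc.symm), mul_zero]
    simp only [h1]
    exact sum_fin_ite _ _
  -- the per-column inequality
  have hcolsum : ∀ b : n,
      (fun a => diagMat m n s a b) ⬝ᵥ (fun a => diagMat m n s a b)
        - ∑ l, (u l ⬝ᵥ (fun a => diagMat m n s a b)) ^ 2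
      ≤ ∑ a, (diagMat m n s a b - N a b) ^ 2 := by
    intro b
    obtain ⟨coef, hv⟩ := hcol b
    have h := proj_ineq u hu (fun a => diagMat m n s a b) (fun a => N a b) coef hv
    have h2 : ((fun a => diagMat m n s a b) - fun a => N a b) ⬝ᵥ
        ((fun a => diagMat m n s a b) - fun a => N a b)
        = ∑ a, (diagMat m n s a b - N a b) ^ 2 := by
      rw [dotProduct]
      apply Finset.sum_congr rfl
      intro a _
      simp [Pi.sub_apply]
      ring
    rw [h2] at h
    exact h
  -- summing up
  have hswap : matFrobSq (diagMat m n s - N)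
      = ∑ b, ∑ a, (diagMat m n s a b - N a b) ^ 2 := by
    rw [matFrobSq, Finset.sum_comm]
    apply Finset.sum_congr rfl; intro b _
    apply Finset.sum_congr rfl; intro a _
    simp [Matrix.sub_apply]
  have hdiagsum : ∑ b, (fun a => diagMat m n s a b) ⬝ᵥ (fun a => diagMat m n s a b)
      = matFrobSq (diagMat m n s) := by
    rw [matFrobSq, Finset.sum_comm]
    apply Finset.sum_congr rfl; intro b _
    rw [dotProduct]
    apply Finset.sum_congr rfl; intro a _
    ring
  have hmain : matFrobSq (diagMat m n s)
      - ∑ b, ∑ l, (u l ⬝ᵥ (fun a => diagMat m n s a b)) ^ 2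
      ≤ matFrobSq (diagMat m n s - N) := by
    rw [hswap, ← hdiagsum, ← Finset.sum_sub_distrib]
    exact Finset.sum_le_sum fun b _ => hcolsum b
  -- computing the subtracted term
  have hA2 : ∑ b, ∑ l, (u l ⬝ᵥ (fun a => diagMat m n s a b)) ^ 2
      = ∑ i ∈ Finset.range (min cm cn), q i * s i ^ 2 := by
    rw [← Equiv.sum_comp (Fintype.equivFin n).symm
      (fun b => ∑ l, (u l ⬝ᵥ (fun a => diagMat m n s a b)) ^ 2)]
    have h1 : ∀ t : Fin cn,
        ∑ l, (u l ⬝ᵥ (fun a => diagMat m n s a ((Fintype.equivFin n).symm t))) ^ 2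
          = if (t : ℕ) < cm then q (t : ℕ) * s (t : ℕ) ^ 2 else 0 := by
      intro t
      have h2 : ∀ l : Fin K, u l ⬝ᵥ (fun a => diagMat m n s a ((Fintype.equivFin n).symm t))
          = if h : (t : ℕ) < cm then u l (em.symm ⟨(t : ℕ), h⟩) * s (t : ℕ) else 0 := by
        intro l
        rw [hdot l ((Fintype.equivFin n).symm t)]
        simp only [Equiv.apply_symm_apply]
      simp only [h2]
      by_cases h : (t : ℕ) < cm
      · simp only [dif_pos h, if_pos h]
        simp only [hq_def, dif_pos h]
        rw [Finset.sum_mul]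
        apply Finset.sum_congr rfl; intro l _
        ring
      · simp only [dif_neg h, if_neg h]
        simp
    simp only [h1]
    rw [Fin.sum_univ_eq_sum_range (fun i => if i < cm then q i * s i ^ 2 else 0)]
    rw [← Finset.sum_filter, filter_range_min, Nat.min_comm]
  -- final arithmetic via rearrange
  have hc' : ∀ {i j : ℕ}, i ≤ j → s j ^ 2 ≤ s i ^ 2 := by
    intro i j hij
    exact pow_le_pow_left₀ (hs0 j) (hs hij) 2
  have hqs' : ∑ i ∈ Finset.range (min cm cn), q i ≤ (r : ℝ) := by
    have h1 : ∑ i ∈ Finset.range (min cm cn), q i ≤ ∑ i ∈ Finset.range cm, q i := by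
      apply Finset.sum_le_sum_of_subset_of_nonneg
      · exact Finset.range_subset_range.mpr (Nat.min_le_left cm cn)
      · intro i _ _; exact hq0 i
    rw [hqsum] at h1
    calc ∑ i ∈ Finset.range (min cm cn), q i ≤ (K : ℝ) := h1
      _ ≤ (r : ℝ) := Nat.cast_le.mpr hfinrank
  have hre := rearrange (min cm cn) r (fun i => s i ^ 2) q (fun h => hc' h)
    (fun i => sq_nonneg _) hq0 hq1 hqs'
  rw [matFrobSq_diagMat s] at hmain
  rw [hA2] at hmain
  calc ∑ i ∈ Finset.range (min cm cn), (if i < r then 0 else s i ^ 2)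
      ≤ ∑ i ∈ Finset.range (min cm cn), s i ^ 2
        - ∑ i ∈ Finset.range (min cm cn), q i * s i ^ 2 := hre
    _ ≤ matFrobSq (diagMat m n s - N) := hmain

/-! ### Eckart–Young -/

variable [DecidableEq m] [DecidableEq n]

lemma topLeft_ortho (M : Matrix m n ℝ) (r : ℕ) (A : Matrix m (Fin r) ℝ)
    (hA : IsTopLeftSingVecs M r A) : Aᵀ * A = 1 := by
  classical
  obtain ⟨U, s, V, ⟨hU, -, -, -, -, -⟩, hr, hAdef⟩ := hA
  funext k k'
  rw [Matrix.mul_apply, Matrix.one_apply]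
  have h1 : ∀ a : m, Aᵀ k a * A a k'
      = Uᵀ ((Fintype.equivFin m).symm (Fin.castLE hr k)) a
        * U a ((Fintype.equivFin m).symm (Fin.castLE hr k')) := by
    intro a
    rw [Matrix.transpose_apply, Matrix.transpose_apply, hAdef, hAdef]
  rw [Finset.sum_congr rfl fun a _ => h1 a, ← Matrix.mul_apply, hU, Matrix.one_apply]
  congr 1
  simp only [eq_iff_iff]
  constructor
  · intro h
    have h2 := (Fintype.equivFin m).symm.injective h
    have h3 : (k : ℕ) = (k' : ℕ) := by
      have := congrArg (fun x : Fin _ => (x : ℕ)) h2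
      simpa using this
    exact Fin.ext h3
  · intro h; rw [h]

lemma eckartYoung (M : Matrix m n ℝ) (r : ℕ) (A : Matrix m (Fin r) ℝ)
    (hA : IsTopLeftSingVecs M r A) (N : Matrix m n ℝ) (hN : N.rank ≤ r) :
    matFrobSq (M - A * Aᵀ * M) ≤ matFrobSq (M - N) := by
  classical
  obtain ⟨U, s, V, ⟨hU, hV, hanti, hs0, hszero, hM⟩, hr, hAdef⟩ := hA
  set φ := (Fintype.equivFin m).symm with hφ
  set Jmat : Matrix m m ℝ :=
    Matrix.of (fun c' c => if c' = c ∧ ((Fintype.equivFin m) c : ℕ) < r then 1 else 0)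
    with hJ
  set s' : ℕ → ℝ := fun i => if i < r then 0 else s i with hs'
  -- step 1 : A Aᵀ U = U J
  have hAtU : ∀ (k : Fin r) (c : m),
      (Aᵀ * U) k c = if φ (Fin.castLE hr k) = c then 1 else 0 := by
    intro k c
    rw [Matrix.mul_apply]
    have h1 : ∀ a', Aᵀ k a' * U a' c = Uᵀ (φ (Fin.castLE hr k)) a' * U a' c := by
      intro a'
      rw [Matrix.transpose_apply, Matrix.transpose_apply, hAdef]
    rw [Finset.sum_congr rfl fun a' _ => h1 a', ← Matrix.mul_apply, hU, Matrix.one_apply]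
  have key : ∀ (a c : m),
      (∑ k : Fin r, U a (φ (Fin.castLE hr k)) * (if φ (Fin.castLE hr k) = c then 1 else 0))
        = if ((Fintype.equivFin m) c : ℕ) < r then U a c else 0 := by
    intro a c
    by_cases hc : ((Fintype.equivFin m) c : ℕ) < r
    · rw [if_pos hc, Finset.sum_eq_single (⟨((Fintype.equivFin m) c : ℕ), hc⟩ : Fin r)]
      · have he : φ (Fin.castLE hr ⟨((Fintype.equivFin m) c : ℕ), hc⟩) = c := by
          rw [hφ, Equiv.symm_apply_eq]
          apply Fin.ext
          simp
        rw [if_pos he, he, mul_one]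
      · intro k _ hk
        rw [if_neg, mul_zero]
        intro he
        apply hk
        have h2 : Fin.castLE hr k = (Fintype.equivFin m) c := by
          rw [hφ, Equiv.symm_apply_eq] at he
          exact he
        apply Fin.ext
        have := congrArg (fun x : Fin _ => (x : ℕ)) h2
        simpa using this
      · intro h; exact absurd (Finset.mem_univ _) h
    · rw [if_neg hc]
      apply Finset.sum_eq_zero
      intro k _
      rw [if_neg, mul_zero]
      intro he
      apply hc
      have h2 : Fin.castLE hr k = (Fintype.equivFin m) c := by
        rw [hφ, Equiv.symm_apply_eq] at he
        exact he
      have := congrArg (fun x : Fin _ => (x : ℕ)) h2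
      simp only [Fin.coe_castLE] at this
      rw [← this]
      exact k.isLt
  have hpiU : A * Aᵀ * U = U * Jmat := by
    rw [Matrix.mul_assoc]
    funext a c
    rw [Matrix.mul_apply, Matrix.mul_apply]
    have h1 : ∀ k : Fin r, A a k * (Aᵀ * U) k c
        = U a (φ (Fin.castLE hr k)) * (if φ (Fin.castLE hr k) = c then 1 else 0) := by
      intro k
      rw [hAtU, hAdef]
    rw [Finset.sum_congr rfl fun k _ => h1 k, key a c]
    symm
    by_cases hc : ((Fintype.equivFin m) c : ℕ) < r
    · rw [if_pos hc]
      have h2 : ∀ c' : m, U a c' * Jmat c' c = if c' = c then U a c' else 0 := by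
        intro c'
        rw [hJ]
        by_cases h3 : c' = c <;> simp [h3, hc]
      rw [Finset.sum_congr rfl fun c' _ => h2 c', Finset.sum_ite_eq' Finset.univ c (fun c' => U a c')]
      simp
    · rw [if_neg hc]
      apply Finset.sum_eq_zero
      intro c' _
      rw [hJ]
      simp [hc]
  -- step 2 : the residual is U diag(s') Vᵀ
  have hDD : diagMat m n s - Jmat * diagMat m n s = diagMat m n s' := by
    funext a b
    have hJD : (Jmat * diagMat m n s) a b
        = if ((Fintype.equivFin m) a : ℕ) < r then diagMat m n s a b else 0 := by
      rw [Matrix.mul_apply]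
      rw [Finset.sum_eq_single a]
      · rw [hJ]
        by_cases h1 : ((Fintype.equivFin m) a : ℕ) < r <;> simp [h1]
      · intro c _ hca
        have hns : ¬(a = c ∧ ((Fintype.equivFin m) c : ℕ) < r) := fun h => hca h.1.symm
        rw [hJ]
        simp [hns]
      · intro h; exact absurd (Finset.mem_univ _) h
    rw [Matrix.sub_apply, hJD]
    simp only [diagMat, Matrix.of_apply, hs']
    by_cases h2 : ((Fintype.equivFin m) a : ℕ) = ((Fintype.equivFin n) b : ℕ)
    · by_cases h1 : ((Fintype.equivFin m) a : ℕ) < r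
      · have h3 : ((Fintype.equivFin n) b : ℕ) < r := h2 ▸ h1
        simp [h1, h2, h3]
      · have h3 : ¬((Fintype.equivFin n) b : ℕ) < r := h2 ▸ h1
        simp [h1, h2, h3]
    · by_cases h1 : ((Fintype.equivFin m) a : ℕ) < r <;> simp [h1, h2]
  have hres : M - A * Aᵀ * M = U * diagMat m n s' * Vᵀ := by
    rw [hM]
    rw [← Matrix.mul_assoc (A * Aᵀ) (U * diagMat m n s) Vᵀ,
      ← Matrix.mul_assoc (A * Aᵀ) U (diagMat m n s), hpiU,
      Matrix.mul_assoc U Jmat (diagMat m n s),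
      ← Matrix.sub_mul, ← Matrix.mul_sub, hDD]
  have hlhs : matFrobSq (M - A * Aᵀ * M)
      = ∑ i ∈ Finset.range (min (Fintype.card m) (Fintype.card n)),
          (if i < r then 0 else s i ^ 2) := by
    rw [hres, matFrobSq_conj U _ V hU hV, matFrobSq_diagMat]
    apply Finset.sum_congr rfl
    intro i _
    by_cases h : i < r <;> simp [hs', h]
  have hUU : U * Uᵀ = 1 := mul_eq_one_comm.mp hU
  have hVV : V * Vᵀ = 1 := mul_eq_one_comm.mp hV
  have hMN : M - N = U * (diagMat m n s - Uᵀ * N * V) * Vᵀ := by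
    rw [Matrix.mul_sub, Matrix.sub_mul, ← hM]
    congr 1
    rw [← Matrix.mul_assoc U (Uᵀ * N) V, ← Matrix.mul_assoc U Uᵀ N, hUU, Matrix.one_mul,
      Matrix.mul_assoc N V Vᵀ, hVV, Matrix.mul_one]
  have hrank : (Uᵀ * N * V).rank ≤ r :=
    le_trans (le_trans (Matrix.rank_mul_le_left (Uᵀ * N) V)
      (Matrix.rank_mul_le_right Uᵀ N)) hN
  have happrox := diag_approx s hanti hs0 r (Uᵀ * N * V) hrank
  rw [hlhs, hMN, matFrobSq_conj U _ V hU hV]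
  exact happrox


end MatrixLemmas
end ST
end


noncomputable section Glue
namespace ST
open Tensor

variable {d : ℕ} {I r : Fin d → ℕ}

lemma reindex_mulx {α β γ α' β' γ' : Type*} [Fintype β] [Fintype β']
    (e : α ≃ α') (f : β ≃ β') (g : γ ≃ γ') (M : Matrix α β ℝ) (N : Matrix β γ ℝ) :
    (Matrix.reindex e f M) * (Matrix.reindex f g N) = Matrix.reindex e g (M * N) := by
  funext a c
  simp only [Matrix.reindex_apply, Matrix.submatrix_apply, Matrix.mul_apply]
  exact (Fintype.sum_equiv f (fun x => M (e.symm a) x * N x (g.symm c))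
    (fun x => M (e.symm a) (f.symm x) * N (f.symm x) (g.symm c)) (fun x => by simp)).symm

lemma reindex_onex {α α' : Type*} [Fintype α] [Fintype α'] [DecidableEq α] [DecidableEq α']
    (e : α ≃ α') : Matrix.reindex e e (1 : Matrix α α ℝ) = 1 := by
  funext a b
  simp only [Matrix.reindex_apply, Matrix.submatrix_apply, Matrix.one_apply]
  by_cases h : a = b
  · simp [h]
  · rw [if_neg, if_neg h]
    intro hc
    exact h (e.symm.injective hc)

lemma rank_reindex_le {α α' β : Type*} [Fintype α] [Fintype α'] [Fintype β]
    [DecidableEq α] [DecidableEq α'] (e : α ≃ α') (M : Matrix α β ℝ) :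
    (Matrix.reindex e (Equiv.refl β) M).rank ≤ M.rank := by
  have h : Matrix.reindex e (Equiv.refl β) M
      = (Matrix.reindex e (Equiv.refl α) (1 : Matrix α α ℝ)) * M := by
    funext a b
    simp only [Matrix.reindex_apply, Matrix.submatrix_apply, Matrix.mul_apply,
      Matrix.one_apply, Equiv.refl_symm, Equiv.refl_apply, ite_mul, one_mul, zero_mul]
    change M (e.symm a) b = ∑ j, (if e.symm a = j then (1 : ℝ) else 0) * M j b
    simp
  rw [h]
  exact Matrix.rank_mul_le_right _ _

/-- The factor matrices of `stCore`. -/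
def CtMx (A : ∀ j, Matrix (Fin (I j)) (Fin (r j)) ℝ) (t : ℕ) :
    ∀ k, Matrix (Fin (stDims I r t k)) (Fin (I k)) ℝ := fun k =>
  if h : (k : ℕ) < t then
    Matrix.reindex (finCongr (stDims_lt h).symm) (Equiv.refl _) (A k)ᵀ
  else Matrix.reindex (finCongr (stDims_ge h).symm) (Equiv.refl _)
    (1 : Matrix (Fin (I k)) (Fin (I k)) ℝ)

lemma stCore_eq (X : Tensor d I) (A : ∀ j, Matrix (Fin (I j)) (Fin (r j)) ℝ) (t : ℕ) :
    stCore X A t = Tensor.multiMul X (CtMx A t) := rfl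

/-- The lifting matrices of `stPartial`. -/
def LtMx (A : ∀ j, Matrix (Fin (I j)) (Fin (r j)) ℝ) (t : ℕ) :
    ∀ k, Matrix (Fin (I k)) (Fin (stDims I r t k)) ℝ := fun k =>
  if h : (k : ℕ) < t then
    Matrix.reindex (Equiv.refl _) (finCongr (stDims_lt h).symm) (A k)
  else Matrix.reindex (Equiv.refl _) (finCongr (stDims_ge h).symm)
    (1 : Matrix (Fin (I k)) (Fin (I k)) ℝ)

lemma stPartial_eq' (X : Tensor d I) (A : ∀ j, Matrix (Fin (I j)) (Fin (r j)) ℝ) (t : ℕ) :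
    stPartial X A t = Tensor.multiMul (Tensor.multiMul X (CtMx A t)) (LtMx A t) := rfl

def piM (A : ∀ j, Matrix (Fin (I j)) (Fin (r j)) ℝ) :
    ∀ j, Matrix (Fin (I j)) (Fin (I j)) ℝ := fun j => A j * (A j)ᵀ

def WtMx (A : ∀ j, Matrix (Fin (I j)) (Fin (r j)) ℝ) (t : ℕ) :
    ∀ k, Matrix (Fin (stDims I r t k)) (Fin (stDims I r t k)) ℝ := fun k =>
  if h : (k : ℕ) = t then
    Matrix.reindex (finCongr (stDims_ge (by omega)).symm) (finCongr (stDims_ge (by omega)).symm)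
      (1 - piM A k)
  else 1

def PtMx (A : ∀ j, Matrix (Fin (I j)) (Fin (r j)) ℝ) (t : ℕ) :
    ∀ k, Matrix (Fin (stDims I r t k)) (Fin (stDims I r t k)) ℝ := fun k =>
  if h : (k : ℕ) = t then
    Matrix.reindex (finCongr (stDims_ge (by omega)).symm) (finCongr (stDims_ge (by omega)).symm)
      (piM A k)
  else 1

def EmatMx (A : ∀ j, Matrix (Fin (I j)) (Fin (r j)) ℝ) (t : ℕ) :
    ∀ k, Matrix (Fin (I k)) (Fin (I k)) ℝ := fun k =>
  if (k : ℕ) < t then piM A k else if (k : ℕ) = t then 1 - piM A k else 1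

def BtMx (A : ∀ j, Matrix (Fin (I j)) (Fin (r j)) ℝ) (t : ℕ) :
    ∀ k, Matrix (Fin (I k)) (Fin (I k)) ℝ := fun k =>
  if (k : ℕ) < t then piM A k else 1

variable (A : ∀ j, Matrix (Fin (I j)) (Fin (r j)) ℝ)

lemma g1 (t : ℕ) (k : Fin d) :
    EmatMx A t k = LtMx A t k * (WtMx A t k * CtMx A t k) := by
  by_cases hlt : (k : ℕ) < t
  · have hne : ¬ (k : ℕ) = t := by omega
    rw [EmatMx, LtMx, WtMx, CtMx, if_pos hlt, dif_pos hlt, dif_neg hne, dif_pos hlt,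
      Matrix.one_mul, reindex_mulx, Matrix.reindex_refl_refl]
    rfl
  · by_cases heq : (k : ℕ) = t
    · rw [EmatMx, LtMx, WtMx, CtMx, if_neg hlt, if_pos heq, dif_neg hlt, dif_pos heq,
        dif_neg hlt, reindex_mulx, Matrix.mul_one, reindex_mulx, Matrix.reindex_refl_refl,
        Matrix.one_mul]
    · rw [EmatMx, LtMx, WtMx, CtMx, if_neg hlt, if_neg heq, dif_neg hlt, dif_neg heq,
        dif_neg hlt, Matrix.one_mul, reindex_mulx, Matrix.reindex_refl_refl, Matrix.one_mul]

lemma g2 (hAo : ∀ j, (A j)ᵀ * A j = 1) (t : ℕ) (k : Fin d) :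
    (LtMx A t k)ᵀ * LtMx A t k = 1 := by
  by_cases hlt : (k : ℕ) < t
  · rw [LtMx, dif_pos hlt, Matrix.transpose_reindex, reindex_mulx, hAo, reindex_onex]
  · rw [LtMx, dif_neg hlt, Matrix.transpose_reindex, reindex_mulx, Matrix.transpose_one,
      Matrix.one_mul, reindex_onex]

lemma g3 (X : Tensor d I) (t : ℕ) :
    Tensor.multiMul (Tensor.multiMul (Tensor.multiMul X (CtMx A t)) (WtMx A t)) (LtMx A t)
      = Tensor.multiMul X (EmatMx A t) := by
  rw [multiMul_multiMul, multiMul_multiMul]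
  have h : (fun j => LtMx A t j * WtMx A t j * CtMx A t j) = EmatMx A t := by
    funext j
    rw [Matrix.mul_assoc, ← g1]
  rw [h]

lemma pi_sym (j : Fin d) : (piM A j)ᵀ = piM A j := by
  rw [piM, Matrix.transpose_mul, Matrix.transpose_transpose]

lemma pi_idem (hAo : ∀ j, (A j)ᵀ * A j = 1) (j : Fin d) :
    piM A j * piM A j = piM A j := by
  show A j * (A j)ᵀ * (A j * (A j)ᵀ) = A j * (A j)ᵀ
  rw [Matrix.mul_assoc, ← Matrix.mul_assoc (A j)ᵀ (A j) (A j)ᵀ, hAo, Matrix.one_mul]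

lemma pi_fact (hAo : ∀ j, (A j)ᵀ * A j = 1) (j : Fin d) :
    1 - piM A j = (1 - piM A j)ᵀ * (1 - piM A j) := by
  rw [Matrix.transpose_sub, Matrix.transpose_one, pi_sym]
  rw [Matrix.sub_mul, Matrix.one_mul, Matrix.mul_sub, Matrix.mul_one, pi_idem A hAo]
  abel

lemma Ct_contract (hAo : ∀ j, (A j)ᵀ * A j = 1) (t : ℕ) (k : Fin d) :
    ∃ B : Matrix (Fin (I k)) (Fin (I k)) ℝ, 1 - (CtMx A t k)ᵀ * CtMx A t k = Bᵀ * B := by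
  by_cases hlt : (k : ℕ) < t
  · refine ⟨1 - piM A k, ?_⟩
    rw [CtMx, dif_pos hlt, Matrix.transpose_reindex, Matrix.transpose_transpose,
      reindex_mulx, Matrix.reindex_refl_refl]
    exact pi_fact A hAo k
  · refine ⟨0, ?_⟩
    rw [CtMx, dif_neg hlt, Matrix.transpose_reindex, Matrix.transpose_one,
      reindex_mulx, Matrix.one_mul, reindex_onex]
    simp

lemma Bt_step (X : Tensor d I) (t : ℕ) (ht : t < d) :
    Tensor.multiMul X (BtMx A t) - Tensor.multiMul X (BtMx A (t + 1))
      = Tensor.multiMul X (EmatMx A t) := by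
  set jt : Fin d := ⟨t, ht⟩ with hjt
  apply multiMul_sub_single X (BtMx A t) (BtMx A (t + 1)) (EmatMx A t) jt
  · intro k hk
    have hne : (k : ℕ) ≠ t := fun hc => hk (Fin.ext (by simp [hjt, hc]))
    by_cases hlt : (k : ℕ) < t
    · have h2 : (k : ℕ) < t + 1 := by omega
      simp [BtMx, hlt, h2]
    · have h2 : ¬ (k : ℕ) < t + 1 := by omega
      simp [BtMx, hlt, h2]
  · have hv : ((jt : Fin d) : ℕ) = t := rfl
    simp only [EmatMx, BtMx, hv, if_pos rfl, if_neg (Nat.lt_irrefl t),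
      if_pos (Nat.lt_succ_self t), if_true]
  · intro k hk
    have hne : (k : ℕ) ≠ t := fun hc => hk (Fin.ext (by simp [hjt, hc]))
    by_cases hlt : (k : ℕ) < t
    · simp [EmatMx, BtMx, hlt]
    · simp [EmatMx, BtMx, hlt, hne]

lemma Emat_orth (hAo : ∀ j, (A j)ᵀ * A j = 1) (X : Tensor d I) (s t : ℕ)
    (hs : s < d) (ht : t < d) (hne : s ≠ t) :
    tinner (Tensor.multiMul X (EmatMx A s)) (Tensor.multiMul X (EmatMx A t)) = 0 := by
  rw [tinner_multiMul]
  rcases Nat.lt_or_ge s t with hlt | hge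
  · set k0 : Fin d := ⟨s, hs⟩ with hk0
    have hz : (fun j => (EmatMx A s j)ᵀ * EmatMx A t j) k0 = 0 := by
      have hv : ((k0 : Fin d) : ℕ) = s := rfl
      simp only [EmatMx, hv, if_neg (Nat.lt_irrefl s), if_pos rfl, if_pos hlt, if_true]
      rw [Matrix.transpose_sub, Matrix.transpose_one, pi_sym, Matrix.sub_mul,
        Matrix.one_mul, pi_idem A hAo, sub_self]
    rw [multiMul_eq_zero X _ k0 hz, tinner_zero_right]
  · have hgt : t < s := lt_of_le_of_ne hge (Ne.symm hne)
    set k0 : Fin d := ⟨t, ht⟩ with hk0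
    have hz : (fun j => (EmatMx A s j)ᵀ * EmatMx A t j) k0 = 0 := by
      have hv : ((k0 : Fin d) : ℕ) = t := rfl
      simp only [EmatMx, hv, if_pos hgt, if_neg (Nat.lt_irrefl t), if_pos rfl, if_true]
      rw [pi_sym, Matrix.mul_sub, Matrix.mul_one, pi_idem A hAo, sub_self]
    rw [multiMul_eq_zero X _ k0 hz, tinner_zero_right]

lemma mode_bound (hAo : ∀ j, (A j)ᵀ * A j = 1) (X Xopt : Tensor d I) (t : ℕ) (ht : t < d)
    (hAt : IsTopLeftSingVecs
        (Matrix.reindex (finCongr (stDims_self (⟨t, ht⟩ : Fin d))) (Equiv.refl _)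
          (Tensor.unfold (Tensor.multiMul X (CtMx A t)) ⟨t, ht⟩))
        (r ⟨t, ht⟩) (A ⟨t, ht⟩))
    (hrank : (Tensor.unfold Xopt (⟨t, ht⟩ : Fin d)).rank ≤ r ⟨t, ht⟩) :
    frobSq (Tensor.multiMul X (EmatMx A t)) ≤ frobSq (X - Xopt) := by
  classical
  set jt : Fin d := ⟨t, ht⟩ with hjt
  have hvt : ((jt : Fin d) : ℕ) = t := rfl
  set Core : Tensor d (stDims I r t) := Tensor.multiMul X (CtMx A t) with hCore
  -- step A
  have hstepA : frobSq (Tensor.multiMul X (EmatMx A t))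
      = frobSq (Tensor.multiMul Core (WtMx A t)) := by
    rw [← g3]
    exact frobSq_multiMul_iso _ _ (g2 A hAo t)
  -- step B : Wt action = id - Pt action
  have hstepB : Core - Tensor.multiMul Core (PtMx A t)
      = Tensor.multiMul Core (WtMx A t) := by
    have h0 : Tensor.multiMul Core
        (fun k => (1 : Matrix (Fin (stDims I r t k)) (Fin (stDims I r t k)) ℝ)) = Core :=
      multiMul_one Core
    have hmain := multiMul_sub_single Core
      (fun k => (1 : Matrix (Fin (stDims I r t k)) (Fin (stDims I r t k)) ℝ))
      (PtMx A t) (WtMx A t) jt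
    rw [h0] at hmain
    apply hmain
    · intro k hk
      have hne : (k : ℕ) ≠ t := fun hc => hk (Fin.ext (by simp [hjt, hc]))
      rw [PtMx, dif_neg hne]
    · rw [WtMx, PtMx, dif_pos hvt, dif_pos hvt]
      have hsub : Matrix.reindex (finCongr (stDims_ge (I := I) (r := r) (t := t) (k := jt) (Nat.lt_irrefl t)).symm)
            (finCongr (stDims_ge (I := I) (r := r) (t := t) (k := jt) (Nat.lt_irrefl t)).symm) (1 - piM A jt)
          = Matrix.reindex (finCongr (stDims_ge (I := I) (r := r) (t := t) (k := jt) (Nat.lt_irrefl t)).symm)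
              (finCongr (stDims_ge (I := I) (r := r) (t := t) (k := jt) (Nat.lt_irrefl t)).symm)
              (1 : Matrix (Fin (I jt)) (Fin (I jt)) ℝ)
            - Matrix.reindex (finCongr (stDims_ge (I := I) (r := r) (t := t) (k := jt) (Nat.lt_irrefl t)).symm)
                (finCongr (stDims_ge (I := I) (r := r) (t := t) (k := jt) (Nat.lt_irrefl t)).symm) (piM A jt) := rfl
      rw [hsub, reindex_onex]
    · intro k hk
      have hne : (k : ℕ) ≠ t := fun hc => hk (Fin.ext (by simp [hjt, hc]))
      rw [WtMx, dif_neg hne]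
  -- step C : unfolding
  have hstepC : Tensor.unfold (Tensor.multiMul Core (WtMx A t)) jt
      = Tensor.unfold Core jt - PtMx A t jt * Tensor.unfold Core jt := by
    rw [← hstepB, unfold_sub]
    congr 1
    apply unfold_multiMul_single
    intro k hk
    have hne : (k : ℕ) ≠ t := fun hc => hk (Fin.ext (by simp [hjt, hc]))
    rw [PtMx, dif_neg hne]
  -- step D : transport along the reindexing
  set eh : Fin (stDims I r t jt) ≃ Fin (I jt) := finCongr (stDims_self jt) with heh
  set Mt : Matrix (Fin (I jt)) (colIdx (stDims I r t) jt) ℝ :=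
    Matrix.reindex eh (Equiv.refl _) (Tensor.unfold Core jt) with hMt
  have hstepD : Matrix.reindex eh (Equiv.refl _)
        (Tensor.unfold (Tensor.multiMul Core (WtMx A t)) jt)
      = Mt - piM A jt * Mt := by
    rw [hstepC]
    funext a b
    have h1 : ∀ p : Fin (stDims I r t jt),
        PtMx A t jt (eh.symm a) p = piM A jt a (eh p) := by
      intro p
      rw [PtMx, dif_pos hvt]
      simp only [Matrix.reindex_apply, Matrix.submatrix_apply]
      congr 1 <;> apply Fin.ext <;>
        simp [heh, finCongr_symm, finCongr_apply, Fin.coe_cast]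
    have hfirst : Tensor.unfold Core jt (eh.symm a) b = Mt a b := by
      simp [hMt]
    have hsecond : (PtMx A t jt * Tensor.unfold Core jt) (eh.symm a) b
        = (piM A jt * Mt) a b := by
      rw [Matrix.mul_apply, Matrix.mul_apply]
      refine Fintype.sum_equiv eh
        (fun p => PtMx A t jt (eh.symm a) p * Tensor.unfold Core jt p b)
        (fun p' => piM A jt a p' * Mt p' b) fun p => ?_
      show PtMx A t jt (eh.symm a) p * Tensor.unfold Core jt p b
        = piM A jt a (eh p) * Mt (eh p) b
      rw [h1 p]
      congr 1
    simp only [Matrix.reindex_apply, Matrix.submatrix_apply, Matrix.sub_apply,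
      Equiv.refl_symm, Equiv.refl_apply]
    rw [hfirst, hsecond]
  -- step E + F + G : Eckart–Young
  have hEY := eckartYoung Mt (r jt) (A jt) hAt
    (Matrix.reindex eh (Equiv.refl _) (Tensor.unfold (Tensor.multiMul Xopt (CtMx A t)) jt))
    (le_trans (rank_reindex_le _ _) (le_trans (rank_unfold_multiMul_le _ _ _) hrank))
  have hG : Mt - Matrix.reindex eh (Equiv.refl _)
        (Tensor.unfold (Tensor.multiMul Xopt (CtMx A t)) jt)
      = Matrix.reindex eh (Equiv.refl _)
          (Tensor.unfold (Tensor.multiMul (X - Xopt) (CtMx A t)) jt) := by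
    rw [multiMul_sub, unfold_sub]
    rfl
  calc frobSq (Tensor.multiMul X (EmatMx A t))
      = frobSq (Tensor.multiMul Core (WtMx A t)) := hstepA
    _ = matFrobSq (Tensor.unfold (Tensor.multiMul Core (WtMx A t)) jt) :=
        frobSq_eq_matFrobSq _ jt
    _ = matFrobSq (Matrix.reindex eh (Equiv.refl _)
          (Tensor.unfold (Tensor.multiMul Core (WtMx A t)) jt)) :=
        (matFrobSq_reindex _ _ _).symm
    _ = matFrobSq (Mt - A jt * (A jt)ᵀ * Mt) := by rw [hstepD]; rfl
    _ ≤ matFrobSq (Mt - Matrix.reindex eh (Equiv.refl _)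
          (Tensor.unfold (Tensor.multiMul Xopt (CtMx A t)) jt)) := hEY
    _ = matFrobSq (Matrix.reindex eh (Equiv.refl _)
          (Tensor.unfold (Tensor.multiMul (X - Xopt) (CtMx A t)) jt)) := by rw [hG]
    _ = matFrobSq (Tensor.unfold (Tensor.multiMul (X - Xopt) (CtMx A t)) jt) :=
        matFrobSq_reindex _ _ _
    _ = frobSq (Tensor.multiMul (X - Xopt) (CtMx A t)) :=
        (frobSq_eq_matFrobSq _ jt).symm
    _ ≤ frobSq (X - Xopt) := frobSq_multiMul_le _ _ (Ct_contract A hAo t)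

end ST
end Glue

/-- quasi-optimality of the STHOSVD with processing order `[1,…,d]`:
the rank-`r` STHOSVD approximation `X̂` satisfies `‖X − X̂‖_F ≤ √d ‖X − X̂_opt‖_F`,
where `X̂_opt` is a best multilinear rank-`r` approximation of `X`. -/
theorem sthosvd_quasi_optimal
    (d : ℕ) (I r : Fin d → ℕ) (X : Tensor d I)
    (A : ∀ j, Matrix (Fin (I j)) (Fin (r j)) ℝ)
    (hA : ∀ j : Fin d,
      IsTopLeftSingVecs
        (Matrix.reindex (finCongr (stDims_self j)) (Equiv.refl _)
          (Tensor.unfold (stCore X A (j : ℕ)) j))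
        (r j) (A j))
    (Xopt : Tensor d I) (hopt : IsBestRankApprox X r Xopt) :
    Tensor.frobNorm (X - stPartial X A d) ≤ Real.sqrt d * Tensor.frobNorm (X - Xopt) := by
  classical
  have hAo : ∀ j, (A j)ᵀ * A j = 1 := fun j => ST.topLeft_ortho _ _ _ (hA j)
  -- telescoping
  have hY0 : Tensor.multiMul X (ST.BtMx A 0) = X := by
    have h : ST.BtMx A 0 = fun k => (1 : Matrix (Fin (I k)) (Fin (I k)) ℝ) := by
      funext k; simp [ST.BtMx]
    rw [h, ST.multiMul_one]
  have hYd : Tensor.multiMul X (ST.BtMx A d) = stPartial X A d := by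
    rw [ST.stPartial_eq', ST.multiMul_multiMul]
    have h : (fun k => ST.LtMx A d k * ST.CtMx A d k) = ST.BtMx A d := by
      funext k
      rw [ST.LtMx, ST.CtMx, ST.BtMx, dif_pos k.isLt, dif_pos k.isLt, if_pos k.isLt,
        ST.reindex_mulx, Matrix.reindex_refl_refl]
      rfl
    rw [h]
  have htel : X - stPartial X A d
      = ∑ t ∈ Finset.range d, Tensor.multiMul X (ST.EmatMx A t) := by
    calc X - stPartial X A d
        = Tensor.multiMul X (ST.BtMx A 0) - Tensor.multiMul X (ST.BtMx A d) := by
          rw [hY0, hYd]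
      _ = ∑ t ∈ Finset.range d,
            (Tensor.multiMul X (ST.BtMx A t) - Tensor.multiMul X (ST.BtMx A (t + 1))) :=
          (Finset.sum_range_sub' (fun t => Tensor.multiMul X (ST.BtMx A t)) d).symm
      _ = ∑ t ∈ Finset.range d, Tensor.multiMul X (ST.EmatMx A t) := by
          apply Finset.sum_congr rfl
          intro t htm
          exact ST.Bt_step A X t (Finset.mem_range.mp htm)
  -- orthogonal decomposition of the error
  have hsum : Tensor.frobSq (X - stPartial X A d)
      = ∑ t ∈ Finset.range d, Tensor.frobSq (Tensor.multiMul X (ST.EmatMx A t)) := by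
    rw [htel, ST.frobSq_eq_tinner, ST.tinner_sum_left]
    apply Finset.sum_congr rfl
    intro t htm
    rw [ST.tinner_sum_right, Finset.sum_eq_single t]
    · exact (ST.frobSq_eq_tinner _).symm
    · intro s hsm hne
      exact ST.Emat_orth A hAo X t s (Finset.mem_range.mp htm) (Finset.mem_range.mp hsm)
        (Ne.symm hne)
    · intro h
      exact absurd htm h
  -- per-mode bound
  have hbound : ∀ t ∈ Finset.range d,
      Tensor.frobSq (Tensor.multiMul X (ST.EmatMx A t)) ≤ Tensor.frobSq (X - Xopt) := by
    intro t htm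
    have ht : t < d := Finset.mem_range.mp htm
    exact ST.mode_bound A hAo X Xopt t ht (hA ⟨t, ht⟩) (hopt.1 ⟨t, ht⟩)
  -- assembling
  have htotal : Tensor.frobSq (X - stPartial X A d) ≤ (d : ℝ) * Tensor.frobSq (X - Xopt) := by
    rw [hsum]
    calc ∑ t ∈ Finset.range d, Tensor.frobSq (Tensor.multiMul X (ST.EmatMx A t))
        ≤ ∑ _t ∈ Finset.range d, Tensor.frobSq (X - Xopt) := Finset.sum_le_sum hbound
      _ = (d : ℝ) * Tensor.frobSq (X - Xopt) := by
          rw [Finset.sum_const, Finset.card_range, nsmul_eq_mul]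
  rw [Tensor.frobNorm, Tensor.frobNorm, ← Real.sqrt_mul (by positivity : (0 : ℝ) ≤ (d : ℝ))]
  exact Real.sqrt_le_sqrt htotal
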